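/- Let (X_n) be a sequence of nonnegative real random variables adapted to a filtration (F_n) such that sum_{n=0}^infty E[max(E[X_{n+1} - X_n | F_n], 0)] < infinity. Then sum_{n=0}^infty |E[X_{n+1} - X_n | F_n]| < infinity almost surely, and X_n converges almost surely. -/

import Mathlib

open MeasureTheory Filter

theorem fisk_quasimartingale {Ω : Type*} {m0 : MeasurableSpace Ω}
    {μ : Measure Ω} [IsProbabilityMeasure μ]
    (F : Filtration ℕ m0) (X : ℕ → Ω → ℝ)
    (hadapted : Adapted F X)
    (hnonneg : ∀ n ω, 0 ≤ X n ω)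
    (hint : ∀ n, Integrable (X n) μ)
    (hsum : Summable fun n => ∫ ω, max ((μ[X (n + 1) - X n | F n]) ω) 0 ∂μ) :
    ∀ᵐ ω ∂μ,
      (Summable fun n => |(μ[X (n + 1) - X n | F n]) ω|) ∧
      ∃ l : ℝ, Tendsto (fun n => X n ω) atTop (nhds l) := by
  set d : ℕ → Ω → ℝ := fun n => μ[X (n + 1) - X n | F n] with hd
  have hdint : ∀ n, Integrable (d n) μ := fun n => integrable_condExp
  have hdmeas : ∀ n, StronglyMeasurable[F n] (d n) := fun n => stronglyMeasurable_condExp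
  have haint : ∀ n, Integrable (fun ω => max (d n ω) 0) μ := fun n => (hdint n).pos_part
  have hanonneg : ∀ n, 0 ≤ ∫ ω, max (d n ω) 0 ∂μ := fun n =>
    integral_nonneg fun ω => le_max_right _ _
  set T : ℝ := ∑' n, ∫ ω, max (d n ω) 0 ∂μ with hT
  have hpartial_a : ∀ N, ∑ n ∈ Finset.range N, ∫ ω, max (d n ω) 0 ∂μ ≤ T :=
    fun N => hsum.sum_le_tsum _ (fun n _ => hanonneg n)
  -- ∫ d n = ∫ X (n+1) - ∫ X n
  have hintd : ∀ n, ∫ ω, d n ω ∂μ = ∫ ω, X (n + 1) ω ∂μ - ∫ ω, X n ω ∂μ := by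
    intro n
    rw [hd]
    rw [integral_condExp (F.le n)]
    have : ∫ ω, (X (n + 1) - X n) ω ∂μ = ∫ ω, (X (n + 1) ω - X n ω) ∂μ := rfl
    rw [this, integral_sub (hint (n + 1)) (hint n)]
  have hdlea : ∀ n, ∫ ω, d n ω ∂μ ≤ ∫ ω, max (d n ω) 0 ∂μ := fun n =>
    integral_mono (hdint n) (haint n) fun ω => le_max_left _ _
  -- ∫ |d n| = 2 ∫ a n - ∫ d n
  have habs : ∀ n, ∫ ω, |d n ω| ∂μ = 2 * (∫ ω, max (d n ω) 0 ∂μ) - ∫ ω, d n ω ∂μ := by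
    intro n
    have h1 : ∀ ω, |d n ω| = 2 * max (d n ω) 0 - d n ω := by
      intro ω
      rcases le_total 0 (d n ω) with h | h
      · rw [abs_of_nonneg h, max_eq_left h]; ring
      · rw [abs_of_nonpos h, max_eq_right h]; ring
    calc ∫ ω, |d n ω| ∂μ = ∫ ω, (2 * max (d n ω) 0 - d n ω) ∂μ := by
          exact integral_congr_ae (Filter.Eventually.of_forall h1)
      _ = 2 * (∫ ω, max (d n ω) 0 ∂μ) - ∫ ω, d n ω ∂μ := by
          rw [integral_sub (((haint n).const_mul 2)) (hdint n), integral_const_mul]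
  -- partial sums of ∫ X telescope
  have hXint_eq : ∀ N, ∫ ω, X N ω ∂μ = ∫ ω, X 0 ω ∂μ + ∑ n ∈ Finset.range N, ∫ ω, d n ω ∂μ := by
    intro N
    have := Finset.sum_range_sub (fun n => ∫ ω, X n ω ∂μ) N
    simp only [hintd]
    linarith [Finset.sum_range_sub (fun n => ∫ ω, X n ω ∂μ) N]
  have hX0nonneg : (0:ℝ) ≤ ∫ ω, X 0 ω ∂μ := integral_nonneg fun ω => hnonneg 0 ω
  have hXnonneg : ∀ N, (0:ℝ) ≤ ∫ ω, X N ω ∂μ := fun N => integral_nonneg fun ω => hnonneg N ω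
  have hXbound : ∀ N, ∫ ω, X N ω ∂μ ≤ ∫ ω, X 0 ω ∂μ + T := by
    intro N
    rw [hXint_eq N]
    have : ∑ n ∈ Finset.range N, ∫ ω, d n ω ∂μ ≤ ∑ n ∈ Finset.range N, ∫ ω, max (d n ω) 0 ∂μ :=
      Finset.sum_le_sum fun n _ => hdlea n
    linarith [hpartial_a N]
  -- partial sums of ∫|d n| are bounded
  have habs_bound : ∀ N, ∑ n ∈ Finset.range N, ∫ ω, |d n ω| ∂μ ≤ 2 * T + ∫ ω, X 0 ω ∂μ := by
    intro N
    have h1 : ∑ n ∈ Finset.range N, ∫ ω, |d n ω| ∂μ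
        = 2 * (∑ n ∈ Finset.range N, ∫ ω, max (d n ω) 0 ∂μ)
          - ∑ n ∈ Finset.range N, ∫ ω, d n ω ∂μ := by
      simp only [habs, Finset.sum_sub_distrib, Finset.mul_sum]
    have h2 : ∑ n ∈ Finset.range N, ∫ ω, d n ω ∂μ = ∫ ω, X N ω ∂μ - ∫ ω, X 0 ω ∂μ := by
      have := hXint_eq N; linarith
    rw [h1, h2]
    have := hpartial_a N
    have := hXnonneg N
    linarith
  have habs_summable : Summable fun n => ∫ ω, |d n ω| ∂μ := by
    apply summable_of_sum_range_le (fun n => integral_nonneg fun ω => abs_nonneg _) habs_bound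
  -- a.e. summability of |d n ω|
  have hae_summable : ∀ᵐ ω ∂μ, Summable fun n => |d n ω| := by
    have hmeas : ∀ n, AEMeasurable (fun ω => (‖d n ω‖₊ : ENNReal)) μ :=
      fun n => (hdint n).aestronglyMeasurable.enorm
    have hlint : ∫⁻ ω, ∑' n, (‖d n ω‖₊ : ENNReal) ∂μ ≠ ⊤ := by
      rw [lintegral_tsum hmeas]
      have heq : ∀ n, ∫⁻ ω, (‖d n ω‖₊ : ENNReal) ∂μ = ENNReal.ofReal (∫ ω, |d n ω| ∂μ) := by
        intro n
        have := ofReal_integral_norm_eq_lintegral_enorm (hdint n)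
        simp only [Real.norm_eq_abs] at this
        rw [this]
        rfl
      simp only [heq]
      rw [← ENNReal.ofReal_tsum_of_nonneg (fun n => integral_nonneg fun ω => abs_nonneg _)
        habs_summable]
      exact ENNReal.ofReal_ne_top
    have hω : ∀ᵐ ω ∂μ, ∑' n, (‖d n ω‖₊ : ENNReal) < ⊤ := by
      refine ae_lt_top' (AEMeasurable.ennreal_tsum hmeas) hlint
    filter_upwards [hω] with ω hω
    have h1 : Summable fun n => ‖d n ω‖₊ := ENNReal.tsum_coe_ne_top_iff_summable.mp hω.ne
    have h2 : Summable fun n => (‖d n ω‖₊ : ℝ) := NNReal.summable_coe.mpr h1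
    exact h2.congr fun n => by simp [Real.norm_eq_abs]
  -- Doob decomposition
  set S : ℕ → Ω → ℝ := fun n ω => ∑ k ∈ Finset.range n, d k ω with hS
  set M : ℕ → Ω → ℝ := fun n ω => X n ω - S n ω with hM
  have hSint : ∀ n, Integrable (S n) μ := by
    intro n
    exact integrable_finset_sum _ fun k _ => hdint k
  have hSmeas' : ∀ n, StronglyMeasurable[F n] (S (n + 1)) := by
    intro n
    apply Finset.stronglyMeasurable_fun_sum
    intro k hk
    exact (hdmeas k).mono (F.mono (Nat.lt_succ_iff.mp (Finset.mem_range.mp hk)))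
  have hSmeas : ∀ n, StronglyMeasurable[F n] (S n) := by
    intro n
    apply Finset.stronglyMeasurable_fun_sum
    intro k hk
    exact (hdmeas k).mono (F.mono (Finset.mem_range.mp hk).le)
  have hMint : ∀ n, Integrable (M n) μ := fun n => (hint n).sub (hSint n)
  have hMadapted : Adapted F M := fun n => (hadapted n).sub (hSmeas n).measurable
  have hMmart : Martingale M F μ := by
    apply martingale_nat hMadapted.stronglyAdapted hMint
    intro n
    have hXn : μ[X n | F n] =ᵐ[μ] X n :=
      (condExp_of_stronglyMeasurable (F.le n) (hadapted n).stronglyMeasurable (hint n)).symm ▸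
        Filter.EventuallyEq.refl _ _
    have hdn : d n =ᵐ[μ] μ[X (n + 1) | F n] - X n := by
      rw [hd]
      calc μ[X (n + 1) - X n | F n] =ᵐ[μ] μ[X (n + 1) | F n] - μ[X n | F n] :=
            condExp_sub (hint (n + 1)) (hint n) _
        _ =ᵐ[μ] μ[X (n + 1) | F n] - X n := by
            filter_upwards [] with ω
            simp [condExp_of_stronglyMeasurable (F.le n) (hadapted n).stronglyMeasurable (hint n)]
    have hMsucc : μ[M (n + 1) | F n] =ᵐ[μ] μ[X (n + 1) | F n] - S (n + 1) := by
      have h1 : μ[M (n + 1) | F n] =ᵐ[μ] μ[X (n + 1) | F n] - μ[S (n + 1) | F n] := by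
        have : M (n + 1) = X (n + 1) - S (n + 1) := rfl
        rw [this]
        exact condExp_sub (hint (n + 1)) (hSint (n + 1)) _
      have h2 : μ[S (n + 1) | F n] = S (n + 1) :=
        condExp_of_stronglyMeasurable (F.le n) (hSmeas' n) (hSint (n + 1))
      rw [h2] at h1
      exact h1
    have hfinal : μ[M (n + 1) | F n] =ᵐ[μ] M n := by
      calc μ[M (n + 1) | F n] =ᵐ[μ] μ[X (n + 1) | F n] - S (n + 1) := hMsucc
        _ =ᵐ[μ] M n := by
          filter_upwards [hdn] with ω hω
          have hS1 : S (n + 1) ω = S n ω + d n ω := Finset.sum_range_succ _ _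
          have hω' : d n ω = (μ[X (n + 1) | F n]) ω - X n ω := hω
          simp only [Pi.sub_apply, hM]
          rw [hS1]
          linarith
    exact hfinal.symm
  -- L1 bound on M
  have hMbound : ∀ n, ∫ ω, ‖M n ω‖ ∂μ ≤ 2 * (∫ ω, X 0 ω ∂μ) + 3 * T := by
    intro n
    have hb1 : ∫ ω, ‖M n ω‖ ∂μ ≤ ∫ ω, (X n ω + ∑ k ∈ Finset.range n, |d k ω|) ∂μ := by
      apply integral_mono (hMint n).norm
        ((hint n).add (integrable_finset_sum _ fun k _ => (hdint k).abs))
      intro ω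
      simp only [Real.norm_eq_abs, hM]
      calc |X n ω - S n ω| ≤ |X n ω| + |S n ω| := abs_sub _ _
        _ ≤ X n ω + ∑ k ∈ Finset.range n, |d k ω| := by
            refine add_le_add ?_ ?_
            · rw [abs_of_nonneg (hnonneg n ω)]
            · exact Finset.abs_sum_le_sum_abs _ _
    have hb2 : ∫ ω, (X n ω + ∑ k ∈ Finset.range n, |d k ω|) ∂μ
        = ∫ ω, X n ω ∂μ + ∑ k ∈ Finset.range n, ∫ ω, |d k ω| ∂μ := by
      rw [integral_add (hint n) (integrable_finset_sum _ fun k _ => (hdint k).abs),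
        integral_finset_sum _ fun k _ => (hdint k).abs]
    have := hXbound n
    have := habs_bound n
    calc ∫ ω, ‖M n ω‖ ∂μ ≤ ∫ ω, X n ω ∂μ + ∑ k ∈ Finset.range n, ∫ ω, |d k ω| ∂μ := by
          rw [← hb2]; exact hb1
      _ ≤ 2 * (∫ ω, X 0 ω ∂μ) + 3 * T := by linarith
  have hT0 : (0:ℝ) ≤ T := tsum_nonneg hanonneg
  set R : NNReal := (2 * (∫ ω, X 0 ω ∂μ) + 3 * T).toNNReal with hR
  have hMsnorm : ∀ n, eLpNorm (M n) 1 μ ≤ R := by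
    intro n
    rw [eLpNorm_one_eq_lintegral_enorm, ← ofReal_integral_norm_eq_lintegral_enorm (hMint n)]
    exact ENNReal.ofReal_le_ofReal (hMbound n)
  have hMconv : ∀ᵐ ω ∂μ, ∃ c, Tendsto (fun n => M n ω) atTop (nhds c) :=
    hMmart.submartingale.exists_ae_tendsto_of_bdd hMsnorm
  -- combine
  filter_upwards [hae_summable, hMconv] with ω hsum_ω hconv_ω
  refine ⟨hsum_ω, ?_⟩
  obtain ⟨c, hc⟩ := hconv_ω
  have hdsum : Summable fun n => d n ω := hsum_ω.of_abs
  have hStendsto : Tendsto (fun n => S n ω) atTop (nhds (∑' n, d n ω)) :=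
    hdsum.hasSum.tendsto_sum_nat
  refine ⟨c + ∑' n, d n ω, ?_⟩
  have : (fun n => X n ω) = fun n => M n ω + S n ω := by
    funext n; simp [hM]
  rw [this]
  exact hc.add hStendsto
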